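/- arXiv:2011.03447 — 2 statements merged into one kernel-verified Lean document; each statement's English description precedes it below -/
import Mathlib

section
/- Under assumption (SH), the map A ↦ p_A(·) is continuous from (𝒜, ‖·‖₂) to (C([s,T];ℝⁿ), ‖·‖_∞), where for each A ∈ 𝒜 the multiplier p_A is the unique solution of the backward system −ṗ_A(t) = Aᵀ p_A(t) − Q x̄_A(t) on [s,T] with −p_A(T) = Q_f x̄_A(T) and {x̄_A : A ∈ 𝒜} are the optimal trajectories of the averaged LQ problem. -/
open MeasureTheory Set Matrix Filter Topology

noncomputable instance matMS {k l : ℕ} : MeasurableSpace (Matrix (Fin k) (Fin l) ℝ) := borel _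
instance matBS {k l : ℕ} : BorelSpace (Matrix (Fin k) (Fin l) ℝ) := ⟨rfl⟩

/-- The matrix 2-norm (operator norm w.r.t. Euclidean norms). -/
noncomputable def opN {k l : ℕ} (M : Matrix (Fin k) (Fin l) ℝ) : ℝ :=
  ‖LinearMap.toContinuousLinearMap (Matrix.toEuclideanLin M)‖

/-- Application of a matrix to a Euclidean vector. -/
noncomputable def app {k l : ℕ} (M : Matrix (Fin k) (Fin l) ℝ)
    (v : EuclideanSpace ℝ (Fin l)) : EuclideanSpace ℝ (Fin k) :=
  Matrix.toEuclideanLin M v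

/-- `x` is the solution on `[s,T]` of `ẋ = A x + B u`, `x(s) = x₀` (in integral form). -/
noncomputable def IsTraj {n m : ℕ} (B : Matrix (Fin n) (Fin m) ℝ) (s T : ℝ)
    (x₀ : EuclideanSpace ℝ (Fin n)) (A : Matrix (Fin n) (Fin n) ℝ)
    (u : ℝ → EuclideanSpace ℝ (Fin m)) (x : ℝ → EuclideanSpace ℝ (Fin n)) : Prop :=
  ContinuousOn x (Set.Icc s T) ∧
  ∀ t ∈ Set.Icc s T, x t = x₀ + ∫ τ in s..t, (app A (x τ) + app B (u τ))

/-- The LQ cost `½∫ₛᵀ (xᵀQx + uᵀRu) dt + ½ x(T)ᵀ Q_f x(T)` of a trajectory/control pair. -/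
noncomputable def cost {n m : ℕ} (Q Qf : Matrix (Fin n) (Fin n) ℝ) (R : Matrix (Fin m) (Fin m) ℝ)
    (s T : ℝ) (x : ℝ → EuclideanSpace ℝ (Fin n)) (u : ℝ → EuclideanSpace ℝ (Fin m)) : ℝ :=
  (1/2) * (∫ t in s..T, ((inner ℝ (x t) (app Q (x t)) : ℝ) + (inner ℝ (u t) (app R (u t)) : ℝ)))
    + (1/2) * (inner ℝ (x T) (app Qf (x T)) : ℝ)

/-- An admissible process for the averaged problem: an integrable (and square-integrable)
control together with the corresponding family of trajectories, one for each `A ∈ 𝒜`. -/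
noncomputable def Adm {n m : ℕ} (B : Matrix (Fin n) (Fin m) ℝ)
    (𝒜 : Set (Matrix (Fin n) (Fin n) ℝ)) (s T : ℝ) (x₀ : EuclideanSpace ℝ (Fin n))
    (u : ℝ → EuclideanSpace ℝ (Fin m))
    (x : Matrix (Fin n) (Fin n) ℝ → ℝ → EuclideanSpace ℝ (Fin n)) : Prop :=
  MeasureTheory.IntegrableOn u (Set.Icc s T) ∧
  MeasureTheory.IntegrableOn (fun t => ‖u t‖ ^ 2) (Set.Icc s T) ∧
  ∀ A ∈ 𝒜, IsTraj B s T x₀ A u (x A)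

/-- The averaged cost `J_{s,π}[u] = ∫_𝒜 cost(x_A, u) dπ(A)`. -/
noncomputable def Jcost {n m : ℕ} (Q Qf : Matrix (Fin n) (Fin n) ℝ)
    (R : Matrix (Fin m) (Fin m) ℝ) (s T : ℝ) (π : Measure (Matrix (Fin n) (Fin n) ℝ))
    (u : ℝ → EuclideanSpace ℝ (Fin m))
    (x : Matrix (Fin n) (Fin n) ℝ → ℝ → EuclideanSpace ℝ (Fin n)) : ℝ :=
  ∫ A, cost Q Qf R s T (x A) u ∂π

/-- The value function `V_π(s,x₀)` of the averaged problem. -/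
noncomputable def Val {n m : ℕ} (Q Qf : Matrix (Fin n) (Fin n) ℝ)
    (R : Matrix (Fin m) (Fin m) ℝ) (B : Matrix (Fin n) (Fin m) ℝ)
    (𝒜 : Set (Matrix (Fin n) (Fin n) ℝ)) (T : ℝ) (π : Measure (Matrix (Fin n) (Fin n) ℝ))
    (s : ℝ) (x₀ : EuclideanSpace ℝ (Fin n)) : ℝ :=
  sInf {c | ∃ u x, Adm B 𝒜 s T x₀ u x ∧ c = Jcost Q Qf R s T π u x}

/-- Wasserstein-1 distance between measures on the matrix space, induced by the 2-norm. -/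
noncomputable def W1 {k : ℕ} (π π' : Measure (Matrix (Fin k) (Fin k) ℝ)) : ℝ :=
  sInf {r | ∃ γ : Measure (Matrix (Fin k) (Fin k) ℝ × Matrix (Fin k) (Fin k) ℝ),
    γ.map Prod.fst = π ∧ γ.map Prod.snd = π' ∧ r = ∫ p, opN (p.1 - p.2) ∂γ}

/-- Support of a measure. -/
def msupport {α : Type*} [TopologicalSpace α] [MeasurableSpace α]
    (π : Measure α) : Set α :=
  {A | ∀ U : Set α, IsOpen U → A ∈ U → 0 < π U}

/-- `pA` is the (unique) solution of the backward adjoint system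
`−ṗ_A(t) = Aᵀ p_A(t) − Q x̄_A(t)` on `[s,T]` with `−p_A(T) = Q_f x̄_A(T)`,
written in integral form. -/
noncomputable def IsAdjoint {n : ℕ} (Q Qf : Matrix (Fin n) (Fin n) ℝ) (s T : ℝ)
    (A : Matrix (Fin n) (Fin n) ℝ) (xbarA : ℝ → EuclideanSpace ℝ (Fin n))
    (pA : ℝ → EuclideanSpace ℝ (Fin n)) : Prop :=
  ContinuousOn pA (Set.Icc s T) ∧
  ∀ t ∈ Set.Icc s T,
    pA t = -(app Qf (xbarA T)) + ∫ τ in t..T, (app Aᵀ (pA τ) - app Q (xbarA τ))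

section Aux

/-- The continuous linear map associated to a matrix. -/
noncomputable def clm {k l : ℕ} (M : Matrix (Fin k) (Fin l) ℝ) :
    EuclideanSpace ℝ (Fin l) →L[ℝ] EuclideanSpace ℝ (Fin k) :=
  LinearMap.toContinuousLinearMap (Matrix.toEuclideanLin M)

lemma norm_app_le {k l : ℕ} (M : Matrix (Fin k) (Fin l) ℝ) (v : EuclideanSpace ℝ (Fin l)) :
    ‖app M v‖ ≤ opN M * ‖v‖ := (clm M).le_opNorm v

lemma opN_nonneg {k l : ℕ} (M : Matrix (Fin k) (Fin l) ℝ) : 0 ≤ opN M := norm_nonneg _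

lemma app_sub_mat {k l : ℕ} (M M' : Matrix (Fin k) (Fin l) ℝ) (v : EuclideanSpace ℝ (Fin l)) :
    app (M - M') v = app M v - app M' v := by
  simp only [app, map_sub, LinearMap.sub_apply]

lemma app_sub_vec {k l : ℕ} (M : Matrix (Fin k) (Fin l) ℝ) (v w : EuclideanSpace ℝ (Fin l)) :
    app M (v - w) = app M v - app M w := map_sub _ _ _

lemma app_continuous {k l : ℕ} (M : Matrix (Fin k) (Fin l) ℝ) : Continuous (app M) :=
  (clm M).continuous

lemma opN_transpose {k : ℕ} (M : Matrix (Fin k) (Fin k) ℝ) : opN Mᵀ = opN M := by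
  have h1 : Mᵀ = Mᴴ := by
    ext i j; simp [Matrix.conjTranspose_apply]
  unfold opN
  rw [h1, Matrix.toEuclideanLin_conjTranspose_eq_adjoint,
    LinearMap.adjoint_toContinuousLinearMap]
  exact ContinuousLinearMap.adjoint.norm_map _

lemma contOn_ii {E : Type*} [NormedAddCommGroup E] {g : ℝ → E} {s T a b : ℝ}
    (hg : ContinuousOn g (Set.Icc s T)) (ha : a ∈ Set.Icc s T) (hb : b ∈ Set.Icc s T) :
    IntervalIntegrable g volume a b :=
  (hg.mono (uIcc_subset_Icc ha hb)).intervalIntegrable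

/-- Integral form of Grönwall's inequality (forward). -/
lemma gronwall_int {a b c K : ℝ} (hc : 0 ≤ c) (hK : 0 ≤ K)
    {f : ℝ → ℝ} (hf : ContinuousOn f (Set.Icc a b))
    (hfnn : ∀ t ∈ Set.Icc a b, 0 ≤ f t)
    (h : ∀ t ∈ Set.Icc a b, f t ≤ c + K * ∫ τ in a..t, f τ) :
    ∀ t ∈ Set.Icc a b, f t ≤ c * Real.exp (K * (t - a)) := by
  intro t ht
  have hab : a ≤ b := le_trans ht.1 ht.2
  have haI : a ∈ Set.Icc a b := ⟨le_rfl, hab⟩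
  set g : ℝ → ℝ := fun t => c + K * ∫ τ in a..t, f τ with hgdef
  have hInt : MeasureTheory.IntegrableOn f (Set.Icc a b) := hf.integrableOn_Icc
  have hgc : ContinuousOn g (Set.Icc a b) := by
    apply continuousOn_const.add (continuousOn_const.mul ?_)
    have h2 : MeasureTheory.IntegrableOn f (Set.uIcc a b) := by rwa [uIcc_of_le hab]
    have := intervalIntegral.continuousOn_primitive_interval (μ := volume) h2
    rwa [uIcc_of_le hab] at this
  have hgnn : ∀ x ∈ Set.Icc a b, 0 ≤ g x := by
    intro x hx
    have h0 : 0 ≤ ∫ τ in a..x, f τ :=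
      intervalIntegral.integral_nonneg hx.1 (fun τ hτ => hfnn τ ⟨hτ.1, le_trans hτ.2 hx.2⟩)
    exact add_nonneg hc (mul_nonneg hK h0)
  have hd : ∀ x ∈ Set.Ico a b, HasDerivWithinAt g (K * f x) (Set.Ici x) x := by
    intro x hx
    have hmem : Set.Icc a b ∈ 𝓝[>] x := by
      rw [mem_nhdsWithin]
      exact ⟨Set.Iio b, isOpen_Iio, hx.2,
        fun y hy => ⟨hx.1.trans (le_of_lt hy.2), le_of_lt hy.1⟩⟩
    have hmeas : StronglyMeasurableAtFilter f (𝓝[>] x) :=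
      ⟨Set.Icc a b, hmem, hf.aestronglyMeasurable measurableSet_Icc⟩
    have hcw : ContinuousWithinAt f (Set.Ioi x) x :=
      (hf x ⟨hx.1, hx.2.le⟩).mono_of_mem_nhdsWithin hmem
    have hF : HasDerivWithinAt (fun u => ∫ τ in a..u, f τ) (f x) (Set.Ici x) x :=
      intervalIntegral.integral_hasDerivWithinAt_right (s := Set.Ici x) (t := Set.Ioi x)
        (contOn_ii hf haI ⟨hx.1, hx.2.le⟩) hmeas hcw
    exact (hF.const_mul K).const_add c
  have hga : ‖g a‖ ≤ c := by
    simp only [hgdef, intervalIntegral.integral_same, mul_zero, add_zero, Real.norm_eq_abs]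
    rw [abs_of_nonneg hc]
  have bound : ∀ x ∈ Set.Ico a b, ‖K * f x‖ ≤ K * ‖g x‖ + 0 := by
    intro x hx
    have hx' : x ∈ Set.Icc a b := ⟨hx.1, hx.2.le⟩
    rw [add_zero, Real.norm_eq_abs, Real.norm_eq_abs,
      abs_of_nonneg (mul_nonneg hK (hfnn x hx')), abs_of_nonneg (hgnn x hx')]
    exact mul_le_mul_of_nonneg_left (h x hx') hK
  have key := norm_le_gronwallBound_of_norm_deriv_right_le hgc hd hga bound t ht
  rw [gronwallBound_ε0] at key
  calc f t ≤ g t := h t ht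
    _ ≤ ‖g t‖ := le_abs_self _
    _ ≤ c * Real.exp (K * (t - a)) := key

/-- Integral form of Grönwall's inequality (backward). -/
lemma gronwall_int_back {a b c K : ℝ} (hc : 0 ≤ c) (hK : 0 ≤ K)
    {f : ℝ → ℝ} (hf : ContinuousOn f (Set.Icc a b))
    (hfnn : ∀ t ∈ Set.Icc a b, 0 ≤ f t)
    (h : ∀ t ∈ Set.Icc a b, f t ≤ c + K * ∫ τ in t..b, f τ) :
    ∀ t ∈ Set.Icc a b, f t ≤ c * Real.exp (K * (b - t)) := by
  have hmap : ∀ t ∈ Set.Icc a b, a + b - t ∈ Set.Icc a b := by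
    intro t ht
    exact ⟨by linarith [ht.2], by linarith [ht.1]⟩
  have hcont : ContinuousOn (fun t => f (a + b - t)) (Set.Icc a b) :=
    hf.comp ((continuous_const.sub continuous_id).continuousOn) hmap
  have h2 : ∀ t ∈ Set.Icc a b, f (a + b - t) ≤ c + K * ∫ τ in a..t, f (a + b - τ) := by
    intro t ht
    have heq : (∫ τ in a..t, f (a + b - τ)) = ∫ τ in (a + b - t)..(a + b - a), f τ :=
      intervalIntegral.integral_comp_sub_left f (a + b)
    rw [heq, show a + b - a = b by ring]
    exact h (a + b - t) (hmap t ht)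
  have h3 := gronwall_int hc hK hcont (fun t ht => hfnn _ (hmap t ht)) h2
  intro t ht
  have h4 := h3 (a + b - t) (hmap t ht)
  rw [show a + b - (a + b - t) = t by ring] at h4
  rw [show a + b - t - a = b - t by ring] at h4
  exact h4

/-- A priori bound for trajectories. -/
lemma traj_bound {n m : ℕ} {B : Matrix (Fin n) (Fin m) ℝ} {s T : ℝ} (hsT : s ≤ T)
    {x₀ : EuclideanSpace ℝ (Fin n)} {A : Matrix (Fin n) (Fin n) ℝ} {C : ℝ}
    (hA : opN A ≤ C) (hC : 0 ≤ C)
    {u : ℝ → EuclideanSpace ℝ (Fin m)} (hu : MeasureTheory.IntegrableOn u (Set.Icc s T))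
    {x : ℝ → EuclideanSpace ℝ (Fin n)} (hx : IsTraj B s T x₀ A u x) :
    ∀ t ∈ Set.Icc s T,
      ‖x t‖ ≤ (‖x₀‖ + ∫ τ in s..T, ‖app B (u τ)‖) * Real.exp (C * (T - s)) := by
  obtain ⟨hxc, hxeq⟩ := hx
  have hsI : s ∈ Set.Icc s T := ⟨le_rfl, hsT⟩
  have hTI : T ∈ Set.Icc s T := ⟨hsT, le_rfl⟩
  have hBu : MeasureTheory.IntegrableOn (fun τ => app B (u τ)) (Set.Icc s T) :=
    (clm B).integrable_comp hu
  have hBuii : ∀ a ∈ Set.Icc s T, ∀ b ∈ Set.Icc s T,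
      IntervalIntegrable (fun τ => app B (u τ)) volume a b := by
    intro a ha b hb
    exact (hBu.mono_set (uIcc_subset_Icc ha hb)).intervalIntegrable
  have hBnn : 0 ≤ ∫ τ in s..T, ‖app B (u τ)‖ :=
    intervalIntegral.integral_nonneg hsT (fun τ _ => norm_nonneg _)
  set c₀ : ℝ := ‖x₀‖ + ∫ τ in s..T, ‖app B (u τ)‖ with hc₀
  have hc₀0 : 0 ≤ c₀ := add_nonneg (norm_nonneg _) hBnn
  have hfc : ContinuousOn (fun t => ‖x t‖) (Set.Icc s T) := hxc.norm
  have hmain : ∀ t ∈ Set.Icc s T, ‖x t‖ ≤ c₀ + C * ∫ τ in s..t, ‖x τ‖ := by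
    intro t ht
    have hAx : ContinuousOn (fun τ => app A (x τ)) (Set.Icc s T) :=
      (app_continuous A).comp_continuousOn hxc
    have I1 : IntervalIntegrable (fun τ => app A (x τ)) volume s t := contOn_ii hAx hsI ht
    have I2 : IntervalIntegrable (fun τ => app B (u τ)) volume s t := hBuii s hsI t ht
    have I3 : IntervalIntegrable (fun τ => C * ‖x τ‖) volume s t :=
      contOn_ii (continuousOn_const.mul hxc.norm) hsI ht
    have I4 : IntervalIntegrable (fun τ => ‖app B (u τ)‖) volume s t := I2.norm
    have step1 : ‖∫ τ in s..t, (app A (x τ) + app B (u τ))‖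
        ≤ ∫ τ in s..t, ‖app A (x τ) + app B (u τ)‖ :=
      intervalIntegral.norm_integral_le_integral_norm ht.1
    have step2 : (∫ τ in s..t, ‖app A (x τ) + app B (u τ)‖)
        ≤ ∫ τ in s..t, (C * ‖x τ‖ + ‖app B (u τ)‖) := by
      apply intervalIntegral.integral_mono_on ht.1 (I1.add I2).norm (I3.add I4)
      intro τ _
      calc ‖app A (x τ) + app B (u τ)‖ ≤ ‖app A (x τ)‖ + ‖app B (u τ)‖ := norm_add_le _ _
        _ ≤ C * ‖x τ‖ + ‖app B (u τ)‖ := by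
            have := norm_app_le A (x τ)
            have h2 : opN A * ‖x τ‖ ≤ C * ‖x τ‖ :=
              mul_le_mul_of_nonneg_right hA (norm_nonneg _)
            linarith
    have step3 : (∫ τ in s..t, (C * ‖x τ‖ + ‖app B (u τ)‖))
        = C * (∫ τ in s..t, ‖x τ‖) + ∫ τ in s..t, ‖app B (u τ)‖ := by
      rw [intervalIntegral.integral_add I3 I4, intervalIntegral.integral_const_mul]
    have step4 : (∫ τ in s..t, ‖app B (u τ)‖) ≤ ∫ τ in s..T, ‖app B (u τ)‖ := by
      apply intervalIntegral.integral_mono_interval le_rfl ht.1 ht.2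
      · exact Filter.Eventually.of_forall (fun τ => norm_nonneg _)
      · exact (hBuii s hsI T hTI).norm
    calc ‖x t‖ = ‖x₀ + ∫ τ in s..t, (app A (x τ) + app B (u τ))‖ := by rw [hxeq t ht]
      _ ≤ ‖x₀‖ + ‖∫ τ in s..t, (app A (x τ) + app B (u τ))‖ := norm_add_le _ _
      _ ≤ ‖x₀‖ + ∫ τ in s..t, ‖app A (x τ) + app B (u τ)‖ := by linarith
      _ ≤ ‖x₀‖ + (C * (∫ τ in s..t, ‖x τ‖) + ∫ τ in s..t, ‖app B (u τ)‖) := by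
          rw [← step3]; linarith
      _ ≤ c₀ + C * ∫ τ in s..t, ‖x τ‖ := by rw [hc₀]; linarith
  intro t ht
  have := gronwall_int hc₀0 hC hfc (fun τ _ => norm_nonneg _) hmain t ht
  calc ‖x t‖ ≤ c₀ * Real.exp (C * (t - s)) := this
    _ ≤ c₀ * Real.exp (C * (T - s)) := by
        apply mul_le_mul_of_nonneg_left _ hc₀0
        exact Real.exp_le_exp.2 (mul_le_mul_of_nonneg_left (by linarith [ht.2]) hC)

/-- Difference bound for trajectories with the same control and nearby matrices. -/
lemma traj_diff {n m : ℕ} {B : Matrix (Fin n) (Fin m) ℝ} {s T : ℝ} (hsT : s ≤ T)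
    {x₀ : EuclideanSpace ℝ (Fin n)} {A A' : Matrix (Fin n) (Fin n) ℝ} {C δ M : ℝ}
    (hA : opN A ≤ C) (hC : 0 ≤ C) (hδ : opN (A - A') ≤ δ) (hδ0 : 0 ≤ δ)
    {u : ℝ → EuclideanSpace ℝ (Fin m)} (hu : MeasureTheory.IntegrableOn u (Set.Icc s T))
    {x x' : ℝ → EuclideanSpace ℝ (Fin n)}
    (hx : IsTraj B s T x₀ A u x) (hx' : IsTraj B s T x₀ A' u x')
    (hM : ∀ t ∈ Set.Icc s T, ‖x' t‖ ≤ M) (hM0 : 0 ≤ M) :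
    ∀ t ∈ Set.Icc s T,
      ‖x t - x' t‖ ≤ (δ * M * (T - s)) * Real.exp (C * (T - s)) := by
  obtain ⟨hxc, hxeq⟩ := hx
  obtain ⟨hxc', hxeq'⟩ := hx'
  have hsI : s ∈ Set.Icc s T := ⟨le_rfl, hsT⟩
  have hBu : MeasureTheory.IntegrableOn (fun τ => app B (u τ)) (Set.Icc s T) :=
    (clm B).integrable_comp hu
  have hc0 : 0 ≤ δ * M * (T - s) := by
    apply mul_nonneg (mul_nonneg hδ0 hM0); linarith
  have hfc : ContinuousOn (fun t => ‖x t - x' t‖) (Set.Icc s T) := (hxc.sub hxc').norm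
  have hmain : ∀ t ∈ Set.Icc s T,
      ‖x t - x' t‖ ≤ (δ * M * (T - s)) + C * ∫ τ in s..t, ‖x τ - x' τ‖ := by
    intro t ht
    have hAx : ContinuousOn (fun τ => app A (x τ)) (Set.Icc s T) :=
      (app_continuous A).comp_continuousOn hxc
    have hAx' : ContinuousOn (fun τ => app A' (x' τ)) (Set.Icc s T) :=
      (app_continuous A').comp_continuousOn hxc'
    have I1 : IntervalIntegrable (fun τ => app A (x τ)) volume s t := contOn_ii hAx hsI ht
    have I1' : IntervalIntegrable (fun τ => app A' (x' τ)) volume s t := contOn_ii hAx' hsI ht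
    have I2 : IntervalIntegrable (fun τ => app B (u τ)) volume s t :=
      (hBu.mono_set (uIcc_subset_Icc hsI ht)).intervalIntegrable
    have I3 : IntervalIntegrable (fun τ => C * ‖x τ - x' τ‖ + δ * M) volume s t :=
      contOn_ii ((continuousOn_const.mul (hxc.sub hxc').norm).add continuousOn_const) hsI ht
    have hdiff : x t - x' t = ∫ τ in s..t, (app A (x τ) - app A' (x' τ)) := by
      rw [hxeq t ht, hxeq' t ht]
      have : (∫ τ in s..t, (app A (x τ) + app B (u τ)))
          - (∫ τ in s..t, (app A' (x' τ) + app B (u τ)))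
          = ∫ τ in s..t, ((app A (x τ) + app B (u τ)) - (app A' (x' τ) + app B (u τ))) :=
        (intervalIntegral.integral_sub (I1.add I2) (I1'.add I2)).symm
      simp only [add_sub_add_right_eq_sub] at this
      rw [← this]; abel
    have hpt : ∀ τ ∈ Set.Icc s t, ‖app A (x τ) - app A' (x' τ)‖
        ≤ C * ‖x τ - x' τ‖ + δ * M := by
      intro τ hτ
      have hτ' : τ ∈ Set.Icc s T := ⟨hτ.1, hτ.2.trans ht.2⟩
      have heq : app A (x τ) - app A' (x' τ)
          = app A (x τ - x' τ) + app (A - A') (x' τ) := by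
        rw [app_sub_vec, app_sub_mat]; abel
      rw [heq]
      calc ‖app A (x τ - x' τ) + app (A - A') (x' τ)‖
          ≤ ‖app A (x τ - x' τ)‖ + ‖app (A - A') (x' τ)‖ := norm_add_le _ _
        _ ≤ C * ‖x τ - x' τ‖ + δ * M := by
            have h1 := norm_app_le A (x τ - x' τ)
            have h2 := norm_app_le (A - A') (x' τ)
            have h3 : opN A * ‖x τ - x' τ‖ ≤ C * ‖x τ - x' τ‖ :=
              mul_le_mul_of_nonneg_right hA (norm_nonneg _)
            have h4 : opN (A - A') * ‖x' τ‖ ≤ δ * M :=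
              mul_le_mul hδ (hM τ hτ') (norm_nonneg _) hδ0
            linarith
    have step1 : ‖x t - x' t‖ ≤ ∫ τ in s..t, ‖app A (x τ) - app A' (x' τ)‖ := by
      rw [hdiff]; exact intervalIntegral.norm_integral_le_integral_norm ht.1
    have step2 : (∫ τ in s..t, ‖app A (x τ) - app A' (x' τ)‖)
        ≤ ∫ τ in s..t, (C * ‖x τ - x' τ‖ + δ * M) :=
      intervalIntegral.integral_mono_on ht.1 (I1.sub I1').norm I3 hpt
    have step3 : (∫ τ in s..t, (C * ‖x τ - x' τ‖ + δ * M))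
        = C * (∫ τ in s..t, ‖x τ - x' τ‖) + (δ * M) * (t - s) := by
      rw [intervalIntegral.integral_add
        (contOn_ii (g := fun τ => C * ‖x τ - x' τ‖) (continuousOn_const.mul (hxc.sub hxc').norm) hsI ht)
        intervalIntegrable_const, intervalIntegral.integral_const_mul,
        intervalIntegral.integral_const, smul_eq_mul, mul_comm (t - s)]
    have step4 : (δ * M) * (t - s) ≤ (δ * M) * (T - s) := by
      apply mul_le_mul_of_nonneg_left _ (mul_nonneg hδ0 hM0)
      linarith [ht.2]
    calc ‖x t - x' t‖ ≤ C * (∫ τ in s..t, ‖x τ - x' τ‖) + (δ * M) * (t - s) := by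
          rw [← step3]; linarith
      _ ≤ (δ * M * (T - s)) + C * ∫ τ in s..t, ‖x τ - x' τ‖ := by
          rw [mul_assoc]; linarith
  intro t ht
  have := gronwall_int hc0 hC hfc (fun τ _ => norm_nonneg _) hmain t ht
  calc ‖x t - x' t‖ ≤ (δ * M * (T - s)) * Real.exp (C * (t - s)) := this
    _ ≤ (δ * M * (T - s)) * Real.exp (C * (T - s)) := by
        apply mul_le_mul_of_nonneg_left _ hc0
        exact Real.exp_le_exp.2 (mul_le_mul_of_nonneg_left (by linarith [ht.2]) hC)

/-- A priori bound for adjoint states. -/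
lemma adj_bound {n : ℕ} {Q Qf : Matrix (Fin n) (Fin n) ℝ} {s T : ℝ} (hsT : s ≤ T)
    {A : Matrix (Fin n) (Fin n) ℝ} {C M : ℝ} (hAt : opN Aᵀ ≤ C) (hC : 0 ≤ C)
    {xb pA : ℝ → EuclideanSpace ℝ (Fin n)}
    (hxc : ContinuousOn xb (Set.Icc s T))
    (hxb : ∀ t ∈ Set.Icc s T, ‖xb t‖ ≤ M) (hM : 0 ≤ M)
    (hp : IsAdjoint Q Qf s T A xb pA) :
    ∀ t ∈ Set.Icc s T,
      ‖pA t‖ ≤ (opN Qf * M + opN Q * M * (T - s)) * Real.exp (C * (T - s)) := by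
  obtain ⟨hpc, hpeq⟩ := hp
  have hTI : T ∈ Set.Icc s T := ⟨hsT, le_rfl⟩
  set c₀ : ℝ := opN Qf * M + opN Q * M * (T - s) with hc₀
  have hc₀0 : 0 ≤ c₀ := by
    apply add_nonneg (mul_nonneg (opN_nonneg _) hM)
    apply mul_nonneg (mul_nonneg (opN_nonneg _) hM); linarith
  have hfc : ContinuousOn (fun t => ‖pA t‖) (Set.Icc s T) := hpc.norm
  have hmain : ∀ t ∈ Set.Icc s T, ‖pA t‖ ≤ c₀ + C * ∫ τ in t..T, ‖pA τ‖ := by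
    intro t ht
    have hv : ContinuousOn (fun τ => app Aᵀ (pA τ) - app Q (xb τ)) (Set.Icc s T) :=
      ((app_continuous Aᵀ).comp_continuousOn hpc).sub
        ((app_continuous Q).comp_continuousOn hxc)
    have I1 : IntervalIntegrable (fun τ => app Aᵀ (pA τ) - app Q (xb τ)) volume t T :=
      contOn_ii hv ht hTI
    have I3 : IntervalIntegrable (fun τ => C * ‖pA τ‖ + opN Q * M) volume t T :=
      contOn_ii ((continuousOn_const.mul hpc.norm).add continuousOn_const) ht hTI
    have step1 : ‖pA t‖ ≤ ‖app Qf (xb T)‖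
        + ∫ τ in t..T, ‖app Aᵀ (pA τ) - app Q (xb τ)‖ := by
      rw [hpeq t ht]
      calc ‖-(app Qf (xb T)) + ∫ τ in t..T, (app Aᵀ (pA τ) - app Q (xb τ))‖
          ≤ ‖-(app Qf (xb T))‖ + ‖∫ τ in t..T, (app Aᵀ (pA τ) - app Q (xb τ))‖ :=
            norm_add_le _ _
        _ ≤ ‖app Qf (xb T)‖ + ∫ τ in t..T, ‖app Aᵀ (pA τ) - app Q (xb τ)‖ := by
            rw [norm_neg]
            have := intervalIntegral.norm_integral_le_integral_norm (μ := volume)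
              (f := fun τ => app Aᵀ (pA τ) - app Q (xb τ)) ht.2
            linarith
    have step2 : (∫ τ in t..T, ‖app Aᵀ (pA τ) - app Q (xb τ)‖)
        ≤ ∫ τ in t..T, (C * ‖pA τ‖ + opN Q * M) := by
      apply intervalIntegral.integral_mono_on ht.2 I1.norm I3
      intro τ hτ
      have hτ' : τ ∈ Set.Icc s T := ⟨ht.1.trans hτ.1, hτ.2⟩
      have h1 := norm_app_le Aᵀ (pA τ)
      have h2 := norm_app_le Q (xb τ)
      have h3 : opN Aᵀ * ‖pA τ‖ ≤ C * ‖pA τ‖ :=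
        mul_le_mul_of_nonneg_right hAt (norm_nonneg _)
      have h4 : opN Q * ‖xb τ‖ ≤ opN Q * M :=
        mul_le_mul_of_nonneg_left (hxb τ hτ') (opN_nonneg _)
      calc ‖app Aᵀ (pA τ) - app Q (xb τ)‖ ≤ ‖app Aᵀ (pA τ)‖ + ‖app Q (xb τ)‖ :=
            norm_sub_le _ _
        _ ≤ C * ‖pA τ‖ + opN Q * M := by linarith
    have step3 : (∫ τ in t..T, (C * ‖pA τ‖ + opN Q * M))
        = C * (∫ τ in t..T, ‖pA τ‖) + (opN Q * M) * (T - t) := by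
      rw [intervalIntegral.integral_add
        (contOn_ii (g := fun τ => C * ‖pA τ‖) (continuousOn_const.mul hpc.norm) ht hTI) intervalIntegrable_const,
        intervalIntegral.integral_const_mul, intervalIntegral.integral_const, smul_eq_mul,
        mul_comm (T - t)]
    have step4 : (opN Q * M) * (T - t) ≤ (opN Q * M) * (T - s) := by
      apply mul_le_mul_of_nonneg_left _ (mul_nonneg (opN_nonneg _) hM)
      linarith [ht.1]
    have h5 : ‖app Qf (xb T)‖ ≤ opN Qf * M := by
      have h1 := norm_app_le Qf (xb T)
      have h2 : opN Qf * ‖xb T‖ ≤ opN Qf * M :=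
        mul_le_mul_of_nonneg_left (hxb T hTI) (opN_nonneg _)
      linarith
    calc ‖pA t‖ ≤ ‖app Qf (xb T)‖ + ∫ τ in t..T, ‖app Aᵀ (pA τ) - app Q (xb τ)‖ := step1
      _ ≤ ‖app Qf (xb T)‖ + (C * (∫ τ in t..T, ‖pA τ‖) + (opN Q * M) * (T - t)) := by
          rw [← step3]; linarith
      _ ≤ c₀ + C * ∫ τ in t..T, ‖pA τ‖ := by rw [hc₀, mul_assoc]; linarith
  intro t ht
  have := gronwall_int_back hc₀0 hC hfc (fun τ _ => norm_nonneg _) hmain t ht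
  calc ‖pA t‖ ≤ c₀ * Real.exp (C * (T - t)) := this
    _ ≤ c₀ * Real.exp (C * (T - s)) := by
        apply mul_le_mul_of_nonneg_left _ hc₀0
        exact Real.exp_le_exp.2 (mul_le_mul_of_nonneg_left (by linarith [ht.1]) hC)

/-- Difference bound for adjoint states. -/
lemma adj_diff {n : ℕ} {Q Qf : Matrix (Fin n) (Fin n) ℝ} {s T : ℝ} (hsT : s ≤ T)
    {A A' : Matrix (Fin n) (Fin n) ℝ} {C δ P Dx : ℝ}
    (hAt : opN Aᵀ ≤ C) (hC : 0 ≤ C) (hδt : opN (Aᵀ - A'ᵀ) ≤ δ) (hδ0 : 0 ≤ δ)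
    {xb xb' pA pA' : ℝ → EuclideanSpace ℝ (Fin n)}
    (hxc : ContinuousOn xb (Set.Icc s T)) (hxc' : ContinuousOn xb' (Set.Icc s T))
    (hP : ∀ t ∈ Set.Icc s T, ‖pA' t‖ ≤ P) (hP0 : 0 ≤ P)
    (hDx : ∀ t ∈ Set.Icc s T, ‖xb t - xb' t‖ ≤ Dx) (hDx0 : 0 ≤ Dx)
    (hp : IsAdjoint Q Qf s T A xb pA) (hp' : IsAdjoint Q Qf s T A' xb' pA') :
    ∀ t ∈ Set.Icc s T,
      ‖pA t - pA' t‖ ≤ (opN Qf * Dx + (δ * P + opN Q * Dx) * (T - s))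
        * Real.exp (C * (T - s)) := by
  obtain ⟨hpc, hpeq⟩ := hp
  obtain ⟨hpc', hpeq'⟩ := hp'
  have hTI : T ∈ Set.Icc s T := ⟨hsT, le_rfl⟩
  set c₀ : ℝ := opN Qf * Dx + (δ * P + opN Q * Dx) * (T - s) with hc₀
  have haux : 0 ≤ δ * P + opN Q * Dx :=
    add_nonneg (mul_nonneg hδ0 hP0) (mul_nonneg (opN_nonneg _) hDx0)
  have hc₀0 : 0 ≤ c₀ := by
    apply add_nonneg (mul_nonneg (opN_nonneg _) hDx0)
    apply mul_nonneg haux; linarith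
  have hfc : ContinuousOn (fun t => ‖pA t - pA' t‖) (Set.Icc s T) := (hpc.sub hpc').norm
  have hmain : ∀ t ∈ Set.Icc s T,
      ‖pA t - pA' t‖ ≤ c₀ + C * ∫ τ in t..T, ‖pA τ - pA' τ‖ := by
    intro t ht
    have hv : ContinuousOn (fun τ => app Aᵀ (pA τ) - app Q (xb τ)) (Set.Icc s T) :=
      ((app_continuous Aᵀ).comp_continuousOn hpc).sub
        ((app_continuous Q).comp_continuousOn hxc)
    have hv' : ContinuousOn (fun τ => app A'ᵀ (pA' τ) - app Q (xb' τ)) (Set.Icc s T) :=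
      ((app_continuous A'ᵀ).comp_continuousOn hpc').sub
        ((app_continuous Q).comp_continuousOn hxc')
    have I1 : IntervalIntegrable (fun τ => app Aᵀ (pA τ) - app Q (xb τ)) volume t T :=
      contOn_ii hv ht hTI
    have I1' : IntervalIntegrable (fun τ => app A'ᵀ (pA' τ) - app Q (xb' τ)) volume t T :=
      contOn_ii hv' ht hTI
    have I3 : IntervalIntegrable
        (fun τ => C * ‖pA τ - pA' τ‖ + (δ * P + opN Q * Dx)) volume t T :=
      contOn_ii ((continuousOn_const.mul (hpc.sub hpc').norm).add continuousOn_const) ht hTI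
    have hdiff : pA t - pA' t = -(app Qf (xb T - xb' T))
        + ∫ τ in t..T, ((app Aᵀ (pA τ) - app Q (xb τ))
            - (app A'ᵀ (pA' τ) - app Q (xb' τ))) := by
      rw [hpeq t ht, hpeq' t ht, intervalIntegral.integral_sub I1 I1', app_sub_vec]
      abel
    have hpt : ∀ τ ∈ Set.Icc t T,
        ‖(app Aᵀ (pA τ) - app Q (xb τ)) - (app A'ᵀ (pA' τ) - app Q (xb' τ))‖
          ≤ C * ‖pA τ - pA' τ‖ + (δ * P + opN Q * Dx) := by
      intro τ hτ
      have hτ' : τ ∈ Set.Icc s T := ⟨ht.1.trans hτ.1, hτ.2⟩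
      have heq : (app Aᵀ (pA τ) - app Q (xb τ)) - (app A'ᵀ (pA' τ) - app Q (xb' τ))
          = app Aᵀ (pA τ - pA' τ) + app (Aᵀ - A'ᵀ) (pA' τ) - app Q (xb τ - xb' τ) := by
        rw [app_sub_vec, app_sub_mat, app_sub_vec]; abel
      rw [heq]
      have h1 := norm_app_le Aᵀ (pA τ - pA' τ)
      have h2 := norm_app_le (Aᵀ - A'ᵀ) (pA' τ)
      have h3 := norm_app_le Q (xb τ - xb' τ)
      have h4 : opN Aᵀ * ‖pA τ - pA' τ‖ ≤ C * ‖pA τ - pA' τ‖ :=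
        mul_le_mul_of_nonneg_right hAt (norm_nonneg _)
      have h5 : opN (Aᵀ - A'ᵀ) * ‖pA' τ‖ ≤ δ * P :=
        mul_le_mul hδt (hP τ hτ') (norm_nonneg _) hδ0
      have h6 : opN Q * ‖xb τ - xb' τ‖ ≤ opN Q * Dx :=
        mul_le_mul_of_nonneg_left (hDx τ hτ') (opN_nonneg _)
      calc ‖app Aᵀ (pA τ - pA' τ) + app (Aᵀ - A'ᵀ) (pA' τ) - app Q (xb τ - xb' τ)‖
          ≤ ‖app Aᵀ (pA τ - pA' τ) + app (Aᵀ - A'ᵀ) (pA' τ)‖ + ‖app Q (xb τ - xb' τ)‖ :=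
            norm_sub_le _ _
        _ ≤ ‖app Aᵀ (pA τ - pA' τ)‖ + ‖app (Aᵀ - A'ᵀ) (pA' τ)‖ + ‖app Q (xb τ - xb' τ)‖ := by
            have := norm_add_le (app Aᵀ (pA τ - pA' τ)) (app (Aᵀ - A'ᵀ) (pA' τ))
            linarith
        _ ≤ C * ‖pA τ - pA' τ‖ + (δ * P + opN Q * Dx) := by linarith
    have step1 : ‖pA t - pA' t‖ ≤ ‖app Qf (xb T - xb' T)‖
        + ∫ τ in t..T, ‖(app Aᵀ (pA τ) - app Q (xb τ))
            - (app A'ᵀ (pA' τ) - app Q (xb' τ))‖ := by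
      rw [hdiff]
      have hni := intervalIntegral.norm_integral_le_integral_norm (μ := volume)
        (f := fun τ => (app Aᵀ (pA τ) - app Q (xb τ)) - (app A'ᵀ (pA' τ) - app Q (xb' τ)))
        ht.2
      calc ‖-(app Qf (xb T - xb' T)) + _‖
          ≤ ‖-(app Qf (xb T - xb' T))‖ + ‖∫ τ in t..T, ((app Aᵀ (pA τ) - app Q (xb τ))
              - (app A'ᵀ (pA' τ) - app Q (xb' τ)))‖ := norm_add_le _ _
        _ ≤ ‖app Qf (xb T - xb' T)‖ + ∫ τ in t..T, ‖(app Aᵀ (pA τ) - app Q (xb τ))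
              - (app A'ᵀ (pA' τ) - app Q (xb' τ))‖ := by
            rw [norm_neg]; linarith
    have step2 : (∫ τ in t..T, ‖(app Aᵀ (pA τ) - app Q (xb τ))
            - (app A'ᵀ (pA' τ) - app Q (xb' τ))‖)
        ≤ ∫ τ in t..T, (C * ‖pA τ - pA' τ‖ + (δ * P + opN Q * Dx)) :=
      intervalIntegral.integral_mono_on ht.2 (I1.sub I1').norm I3 hpt
    have step3 : (∫ τ in t..T, (C * ‖pA τ - pA' τ‖ + (δ * P + opN Q * Dx)))
        = C * (∫ τ in t..T, ‖pA τ - pA' τ‖) + (δ * P + opN Q * Dx) * (T - t) := by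
      rw [intervalIntegral.integral_add
        (contOn_ii (g := fun τ => C * ‖pA τ - pA' τ‖) (continuousOn_const.mul (hpc.sub hpc').norm) ht hTI)
        intervalIntegrable_const, intervalIntegral.integral_const_mul,
        intervalIntegral.integral_const, smul_eq_mul, mul_comm (T - t)]
    have step4 : (δ * P + opN Q * Dx) * (T - t) ≤ (δ * P + opN Q * Dx) * (T - s) := by
      apply mul_le_mul_of_nonneg_left _ haux; linarith [ht.1]
    have h7 : ‖app Qf (xb T - xb' T)‖ ≤ opN Qf * Dx := by
      have h1 := norm_app_le Qf (xb T - xb' T)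
      have h2 : opN Qf * ‖xb T - xb' T‖ ≤ opN Qf * Dx :=
        mul_le_mul_of_nonneg_left (hDx T hTI) (opN_nonneg _)
      linarith
    calc ‖pA t - pA' t‖
        ≤ ‖app Qf (xb T - xb' T)‖ + ∫ τ in t..T, ‖(app Aᵀ (pA τ) - app Q (xb τ))
            - (app A'ᵀ (pA' τ) - app Q (xb' τ))‖ := step1
      _ ≤ ‖app Qf (xb T - xb' T)‖
          + (C * (∫ τ in t..T, ‖pA τ - pA' τ‖) + (δ * P + opN Q * Dx) * (T - t)) := by
          rw [← step3]; linarith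
      _ ≤ c₀ + C * ∫ τ in t..T, ‖pA τ - pA' τ‖ := by rw [hc₀]; linarith
  intro t ht
  have := gronwall_int_back hc₀0 hC hfc (fun τ _ => norm_nonneg _) hmain t ht
  calc ‖pA t - pA' t‖ ≤ c₀ * Real.exp (C * (T - t)) := this
    _ ≤ c₀ * Real.exp (C * (T - s)) := by
        apply mul_le_mul_of_nonneg_left _ hc₀0
        exact Real.exp_le_exp.2 (mul_le_mul_of_nonneg_left (by linarith [ht.1]) hC)

end Aux

theorem stmt_7 {n m : ℕ} (T : ℝ) (hT : 0 < T) (s : ℝ) (hs : s ∈ Set.Icc 0 T)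
    (x₀ : EuclideanSpace ℝ (Fin n)) (B : Matrix (Fin n) (Fin m) ℝ)
    (𝒜 : Set (Matrix (Fin n) (Fin n) ℝ)) (h𝒜 : IsCompact 𝒜)
    (C𝒜 : ℝ) (hC𝒜 : ∀ A ∈ 𝒜, opN A ≤ C𝒜)
    (Q Qf : Matrix (Fin n) (Fin n) ℝ) (R : Matrix (Fin m) (Fin m) ℝ)
    (hQ : Q.PosSemidef) (hQf : Qf.PosSemidef) (hR : R.PosDef)
    (π : Measure (Matrix (Fin n) (Fin n) ℝ)) [IsProbabilityMeasure π] (hπ : π 𝒜ᶜ = 0)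
    (ubar : ℝ → EuclideanSpace ℝ (Fin m))
    (xbar : Matrix (Fin n) (Fin n) ℝ → ℝ → EuclideanSpace ℝ (Fin n))
    (hadm : Adm B 𝒜 s T x₀ ubar xbar)
    (hopt : ∀ u x, Adm B 𝒜 s T x₀ u x →
      Jcost Q Qf R s T π ubar xbar ≤ Jcost Q Qf R s T π u x)
    (p : Matrix (Fin n) (Fin n) ℝ → ℝ → EuclideanSpace ℝ (Fin n))
    (hp : ∀ A ∈ 𝒜, IsAdjoint Q Qf s T A (xbar A) (p A)) :
    -- the map `A ↦ p_A(·)` is continuous from `(𝒜, ‖·‖₂)` to `(C([s,T];ℝⁿ), ‖·‖_∞)`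
    ∀ A ∈ 𝒜, ∀ ε > 0, ∃ δ > 0, ∀ A' ∈ 𝒜, opN (A - A') < δ →
      ∀ t ∈ Set.Icc s T, ‖p A t - p A' t‖ < ε := by
  intro A hA ε hε
  have hsT : s ≤ T := hs.2
  have hC0 : 0 ≤ C𝒜 := le_trans (opN_nonneg A) (hC𝒜 A hA)
  obtain ⟨huint, husq, htraj⟩ := hadm
  set E := Real.exp (C𝒜 * (T - s)) with hE
  have hE0 : 0 < E := Real.exp_pos _
  have hBnn : 0 ≤ ∫ τ in s..T, ‖app B (ubar τ)‖ :=
    intervalIntegral.integral_nonneg hsT (fun τ _ => norm_nonneg _)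
  set M := (‖x₀‖ + ∫ τ in s..T, ‖app B (ubar τ)‖) * E with hM
  have hM0 : 0 ≤ M := mul_nonneg (add_nonneg (norm_nonneg _) hBnn) hE0.le
  have hxbound : ∀ A' ∈ 𝒜, ∀ t ∈ Set.Icc s T, ‖xbar A' t‖ ≤ M := fun A' hA' =>
    traj_bound hsT (hC𝒜 A' hA') hC0 huint (htraj A' hA')
  set P := (opN Qf * M + opN Q * M * (T - s)) * E with hP
  have hP0 : 0 ≤ P := by
    apply mul_nonneg _ hE0.le
    apply add_nonneg (mul_nonneg (opN_nonneg _) hM0)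
    apply mul_nonneg (mul_nonneg (opN_nonneg _) hM0); linarith
  have hpbound : ∀ A' ∈ 𝒜, ∀ t ∈ Set.Icc s T, ‖p A' t‖ ≤ P := by
    intro A' hA'
    have hAt : opN A'ᵀ ≤ C𝒜 := by rw [opN_transpose]; exact hC𝒜 A' hA'
    exact adj_bound hsT hAt hC0 (htraj A' hA').1 (hxbound A' hA') hM0 (hp A' hA')
  set K1 := M * (T - s) * E with hK1
  have hK10 : 0 ≤ K1 := mul_nonneg (mul_nonneg hM0 (by linarith)) hE0.le
  set K' := (opN Qf * K1 + (P + opN Q * K1) * (T - s)) * E with hK'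
  have hK'0 : 0 ≤ K' := by
    apply mul_nonneg _ hE0.le
    apply add_nonneg (mul_nonneg (opN_nonneg _) hK10)
    apply mul_nonneg (add_nonneg hP0 (mul_nonneg (opN_nonneg _) hK10)); linarith
  set δ := ε / (K' + 1) with hδdef
  have hδ0 : 0 < δ := div_pos hε (by linarith)
  refine ⟨δ, hδ0, ?_⟩
  intro A' hA' hAA' t ht
  have hAA'le : opN (A - A') ≤ δ := hAA'.le
  have hdx : ∀ τ ∈ Set.Icc s T, ‖xbar A τ - xbar A' τ‖ ≤ δ * K1 := by
    intro τ hτ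
    have h1 := traj_diff hsT (hC𝒜 A hA) hC0 hAA'le hδ0.le huint (htraj A hA)
      (htraj A' hA') (hxbound A' hA') hM0 τ hτ
    have h2 : (δ * M * (T - s)) * E = δ * K1 := by rw [hK1]; ring
    linarith
  have hδt : opN (Aᵀ - A'ᵀ) ≤ δ := by
    rw [← Matrix.transpose_sub, opN_transpose]; exact hAA'le
  have hAt : opN Aᵀ ≤ C𝒜 := by rw [opN_transpose]; exact hC𝒜 A hA
  have hDx0 : 0 ≤ δ * K1 := mul_nonneg hδ0.le hK10
  have hed := adj_diff hsT hAt hC0 hδt hδ0.le (htraj A hA).1 (htraj A' hA').1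
    (hpbound A' hA') hP0 hdx hDx0 (hp A hA) (hp A' hA') t ht
  have heq : (opN Qf * (δ * K1) + (δ * P + opN Q * (δ * K1)) * (T - s)) * E = δ * K' := by
    rw [hK']; ring
  have hfin : δ * (K' + 1) = ε := by
    rw [hδdef]; field_simp
  have hfin2 : δ * K' = ε - δ := by rw [← hfin]; ring
  linarith
end

section
/- Under assumption (SH), let 𝒜 = {A₁,…,A_M} be a finite set of n×n matrices and let π^N = Σ_{i=1}^M α_i^N δ_{A_i} be probability measures with α_i^N ≥ 0, Σ_i α_i^N = 1, and suppose α_1^N → 1 and α_i^N → 0 for i = 2,…,M as N → ∞. Let Ã, B̃ be the block-diagonal augmented matrices à = diag(A₁,…,A_M) ∈ ℝ^{nM×nM}, B̃ = (B;…;B) ∈ ℝ^{nM×m}, and let Q̃^N := diag(α_1^N Q,…,α_M^N Q), Q̃_f^N := diag(α_1^N Q_f,…,α_M^N Q_f). Let P̃^N : [s,T] → ℝ^{nM×nM} solve the Riccati equation −Ṗ(t) = Ãᵀ P(t) + P(t) Ã − P(t) B̃ R^{-1} B̃ᵀ P(t) + Q̃^N with P(T) = Q̃_f^N. Then P̃^N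 converges, uniformly on [s,T], to the block matrix P̄(t) whose top-left n×n block is P(t) and whose other blocks are zero, where P : [s,T] → ℝ^{n×n} is the solution of the Riccati equation −Ṗ(t) = A₁ᵀ P(t) + P(t) A₁ − P(t) B R^{-1} Bᵀ P(t) + Q with P(T) = Q_f. -/
open MeasureTheory Set Matrix Filter Topology

attribute [local instance] Matrix.normedAddCommGroup Matrix.normedSpace

/-- The augmented block-diagonal state matrix `Ã = diag(A₁, …, A_M)`. -/
def augA {n M : ℕ} (A : Fin M → Matrix (Fin n) (Fin n) ℝ) :
    Matrix (Fin n × Fin M) (Fin n × Fin M) ℝ :=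
  Matrix.blockDiagonal A

/-- The augmented control matrix `B̃ = (B; …; B)`. -/
def augB {n m M : ℕ} (B : Matrix (Fin n) (Fin m) ℝ) :
    Matrix (Fin n × Fin M) (Fin m) ℝ :=
  Matrix.of fun p j => B p.1 j

/-- The augmented block-diagonal cost matrix `diag(α₁ Q, …, α_M Q)`. -/
def augQ {n M : ℕ} (α : Fin M → ℝ) (Q : Matrix (Fin n) (Fin n) ℝ) :
    Matrix (Fin n × Fin M) (Fin n × Fin M) ℝ :=
  Matrix.blockDiagonal (fun i => α i • Q)

/-- the single-block embedding -/
def bd {n M : ℕ} (i0 : Fin M) (X : Matrix (Fin n) (Fin n) ℝ) :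
    Matrix (Fin n × Fin M) (Fin n × Fin M) ℝ :=
  Matrix.blockDiagonal (fun i => if i = i0 then X else 0)

section Aux
variable {n m M : ℕ} (i0 : Fin M)

lemma matrix_norm_mul_le {I J K : Type*} [Fintype I] [Fintype J] [Fintype K]
    (X : Matrix I J ℝ) (Y : Matrix J K ℝ) :
    ‖X * Y‖ ≤ (Fintype.card J : ℝ) * ‖X‖ * ‖Y‖ := by
  rw [Matrix.norm_le_iff (by positivity)]
  intro i k
  rw [Matrix.mul_apply]
  calc ‖∑ j, X i j * Y j k‖ ≤ ∑ j : J, ‖X i j * Y j k‖ := norm_sum_le _ _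
    _ ≤ ∑ _j : J, ‖X‖ * ‖Y‖ := Finset.sum_le_sum fun j _ => by
        rw [norm_mul]
        exact mul_le_mul (Matrix.norm_entry_le_entrywise_sup_norm X)
          (Matrix.norm_entry_le_entrywise_sup_norm Y) (norm_nonneg _) (norm_nonneg _)
    _ = (Fintype.card J : ℝ) * ‖X‖ * ‖Y‖ := by
        simp [Finset.sum_const, Finset.card_univ, mul_assoc]

lemma norm_blockDiagonal_le {I o : Type*} [Fintype I] [Fintype o] [DecidableEq o]
    (f : o → Matrix I I ℝ) : ‖Matrix.blockDiagonal f‖ ≤ ∑ i, ‖f i‖ := by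
  rw [Matrix.norm_le_iff (by positivity)]
  rintro ⟨p, i⟩ ⟨q, j⟩
  rw [Matrix.blockDiagonal_apply]
  split_ifs with h
  · exact le_trans (Matrix.norm_entry_le_entrywise_sup_norm _)
      (Finset.single_le_sum (fun k _ => norm_nonneg (f k)) (Finset.mem_univ i))
  · simpa using Finset.sum_nonneg (fun k (_ : k ∈ Finset.univ) => norm_nonneg (f k))

lemma bd_mul_augA (A : Fin M → Matrix (Fin n) (Fin n) ℝ) (X : Matrix (Fin n) (Fin n) ℝ) :
    bd i0 X * augA A = bd i0 (X * A i0) := by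
  rw [bd, bd, augA, ← Matrix.blockDiagonal_mul]
  have : (fun k => (if k = i0 then X else 0) * A k) = (fun i => if i = i0 then X * A i0 else 0) := by
    funext i
    split_ifs with h
    · subst h; rfl
    · exact zero_mul _
  rw [this]

lemma augAT_mul_bd (A : Fin M → Matrix (Fin n) (Fin n) ℝ) (X : Matrix (Fin n) (Fin n) ℝ) :
    (augA A)ᵀ * bd i0 X = bd i0 ((A i0)ᵀ * X) := by
  rw [bd, bd, augA, Matrix.blockDiagonal_transpose, ← Matrix.blockDiagonal_mul]
  have : (fun k => (A k)ᵀ * if k = i0 then X else 0) = (fun i => if i = i0 then (A i0)ᵀ * X else 0) := by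
    funext i
    split_ifs with h
    · subst h; rfl
    · exact mul_zero _
  rw [this]

lemma augQ_eq_bd (Q : Matrix (Fin n) (Fin n) ℝ) :
    augQ (fun i => if i = i0 then (1:ℝ) else 0) Q = bd i0 Q := by
  rw [augQ, bd]
  have : (fun i => (if i = i0 then (1:ℝ) else 0) • Q) = (fun i => if i = i0 then Q else 0) := by
    funext i
    split_ifs <;> simp
  rw [this]
end Aux

section Aux2
variable {n m M : ℕ} (i0 : Fin M)

lemma bd_mul_augB (X : Matrix (Fin n) (Fin n) ℝ) (B : Matrix (Fin n) (Fin m) ℝ) :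
    bd i0 X * augB B (M := M) = Matrix.of (fun p j => if p.2 = i0 then (X * B) p.1 j else 0) := by
  ext ⟨p, i⟩ j
  simp only [Matrix.mul_apply, bd, Matrix.blockDiagonal_apply, augB, Matrix.of_apply,
    Fintype.sum_prod_type]
  simp only [ite_mul, zero_mul, Finset.sum_ite_irrel, Finset.sum_const_zero, Finset.sum_ite_eq,
    Finset.mem_univ, if_true]
  split_ifs with h
  · rfl
  · simp

lemma colIf_mul (Z : Matrix (Fin n) (Fin m) ℝ) (W : Matrix (Fin m) (Fin m) ℝ) :
    (Matrix.of (fun (p : Fin n × Fin M) j => if p.2 = i0 then Z p.1 j else 0)) * W =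
      Matrix.of (fun p j => if p.2 = i0 then (Z * W) p.1 j else 0) := by
  ext ⟨p, i⟩ j
  simp only [Matrix.mul_apply, Matrix.of_apply, ite_mul, zero_mul]
  split_ifs with h
  · rfl
  · simp

lemma colIf_mul_augBT (Z : Matrix (Fin n) (Fin m) ℝ) (B : Matrix (Fin n) (Fin m) ℝ) :
    (Matrix.of (fun (p : Fin n × Fin M) j => if p.2 = i0 then Z p.1 j else 0)) * (augB B)ᵀ =
      Matrix.of (fun (p q : Fin n × Fin M) => if p.2 = i0 then (Z * Bᵀ) p.1 q.1 else 0) := by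
  ext ⟨p, i⟩ ⟨q, k⟩
  simp only [Matrix.mul_apply, Matrix.of_apply, Matrix.transpose_apply, augB, ite_mul, zero_mul]
  split_ifs with h
  · rfl
  · simp

lemma colConst_mul_bd (Y X : Matrix (Fin n) (Fin n) ℝ) :
    (Matrix.of (fun (p q : Fin n × Fin M) => if p.2 = i0 then Y p.1 q.1 else 0)) * bd i0 X =
      bd i0 (Y * X) := by
  ext ⟨p, i⟩ ⟨q, j⟩
  simp only [Matrix.mul_apply, Matrix.of_apply, bd, Matrix.blockDiagonal_apply,
    Fintype.sum_prod_type]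
  simp only [ite_mul, zero_mul, mul_ite, mul_zero, Finset.sum_ite_irrel, Finset.sum_const_zero,
    Finset.sum_ite_eq, Finset.mem_univ, if_true]
  by_cases hij : i = j <;> by_cases hi : i = i0
  · subst hij; simp [hi, Matrix.mul_apply]
  · subst hij; simp [hi]
  · subst hi; simp [(Ne.symm hij : j ≠ i), hij]
  · simp [hij, hi]

lemma bd_K_term (X : Matrix (Fin n) (Fin n) ℝ) (B : Matrix (Fin n) (Fin m) ℝ)
    (Ri : Matrix (Fin m) (Fin m) ℝ) :
    bd i0 X * augB B (M := M) * Ri * (augB B (M := M))ᵀ * bd i0 X = bd i0 (X * B * Ri * Bᵀ * X) := by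
  rw [bd_mul_augB i0 X B, colIf_mul i0 (X * B) Ri, colIf_mul_augBT i0 (X * B * Ri) B,
    colConst_mul_bd i0 (X * B * Ri * Bᵀ) X]

end Aux2

section Aux3
variable {n M : ℕ}

/-- `bd` as a linear map. -/
def bdL (i0 : Fin M) :
    Matrix (Fin n) (Fin n) ℝ →ₗ[ℝ] Matrix (Fin n × Fin M) (Fin n × Fin M) ℝ where
  toFun := bd i0
  map_add' X Y := by
    ext ⟨p, i⟩ ⟨q, j⟩
    simp only [bd, Matrix.blockDiagonal_apply, Matrix.add_apply]
    split_ifs <;> simp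
  map_smul' c X := by
    ext ⟨p, i⟩ ⟨q, j⟩
    simp only [bd, Matrix.blockDiagonal_apply, Matrix.smul_apply, RingHom.id_apply]
    split_ifs <;> simp

lemma bd_eq_bdL (i0 : Fin M) (X : Matrix (Fin n) (Fin n) ℝ) : bd i0 X = bdL i0 X := rfl

lemma riccati_diff {S : Type*} [Ring S] (At Aa KK Qn Qb X Y : S) :
    -(At * X + X * Aa - X * KK * X + Qn) - -(At * Y + Y * Aa - Y * KK * Y + Qb) =
      -(At * (X - Y) + (X - Y) * Aa - ((X - Y) * KK * X + Y * KK * (X - Y)) + (Qn - Qb)) := by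
  noncomm_ring

lemma gronwall_le {δ K ε x L : ℝ} (hδ : 0 ≤ δ) (hε : 0 ≤ ε) (hK : 0 < K) (hx : 0 ≤ x)
    (hxL : x ≤ L) : gronwallBound δ K ε x ≤ (δ + ε / K) * Real.exp (K * L) := by
  rw [gronwallBound_of_K_ne_0 hK.ne']
  have h1 : Real.exp (K * x) ≤ Real.exp (K * L) := Real.exp_le_exp.2 (by nlinarith)
  have h2 : (0:ℝ) < Real.exp (K * x) := Real.exp_pos _
  have hεK : 0 ≤ ε / K := by positivity
  nlinarith [Real.exp_pos (K * L)]

lemma bootstrap {E : Type*} [NormedAddCommGroup E] {g : ℝ → E} {L ρ : ℝ} (hL : 0 ≤ L)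
    (hg : ContinuousOn g (Icc 0 L)) (hρ : ρ < 1) (h0 : ‖g 0‖ ≤ ρ)
    (key : ∀ t ∈ Icc (0:ℝ) L, (∀ u ∈ Icc (0:ℝ) t, ‖g u‖ ≤ 1) → ‖g t‖ ≤ ρ) :
    ∀ t ∈ Icc (0:ℝ) L, ‖g t‖ ≤ ρ := by
  have main : ∀ u ∈ Icc (0:ℝ) L, ‖g u‖ ≤ 1 := by
    by_contra hcon
    push_neg at hcon
    obtain ⟨u, hu, hu1⟩ := hcon
    set Bs : Set ℝ := {v | v ∈ Icc (0:ℝ) L ∧ 1 < ‖g v‖} with hBs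
    have hne : Bs.Nonempty := ⟨u, hu, hu1⟩
    have hbdd : BddBelow Bs := ⟨0, fun x hx => hx.1.1⟩
    set t0 := sInf Bs with ht0def
    have ht0mem : t0 ∈ Icc (0:ℝ) L :=
      ⟨le_csInf hne fun x hx => hx.1.1, le_trans (csInf_le hbdd ⟨hu, hu1⟩) hu.2⟩
    have ht0cl : t0 ∈ closure Bs := csInf_mem_closure hne hbdd
    have hcw : ContinuousWithinAt (fun x => ‖g x‖) (Icc 0 L) t0 := ((hg t0 ht0mem).norm)
    have h1le : 1 ≤ ‖g t0‖ := by
      haveI : (𝓝[Bs] t0).NeBot := mem_closure_iff_nhdsWithin_neBot.1 ht0cl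
      have htB : Tendsto (fun x => ‖g x‖) (𝓝[Bs] t0) (𝓝 ‖g t0‖) :=
        (hcw.mono (fun x hx => hx.1) : ContinuousWithinAt _ Bs t0)
      refine ge_of_tendsto htB ?_
      exact eventually_mem_nhdsWithin.mono fun x hx => hx.2.le
    have hbefore : ∀ v ∈ Icc (0:ℝ) L, v < t0 → ‖g v‖ ≤ 1 := by
      intro v hv hvlt
      by_contra hgt
      push_neg at hgt
      exact absurd (csInf_le hbdd ⟨hv, hgt⟩) (not_le.2 hvlt)
    have ht0le : ‖g t0‖ ≤ 1 := by
      rcases eq_or_lt_of_le ht0mem.1 with h0eq | h0lt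
      · rw [← h0eq]; linarith
      · have hcl : t0 ∈ closure (Ico (0:ℝ) t0) := by
          rw [closure_Ico (ne_of_lt h0lt)]
          exact ⟨le_of_lt h0lt, le_rfl⟩
        haveI : (𝓝[Ico (0:ℝ) t0] t0).NeBot := mem_closure_iff_nhdsWithin_neBot.1 hcl
        have hsub : Ico (0:ℝ) t0 ⊆ Icc 0 L := fun x hx =>
          ⟨hx.1, le_trans (le_of_lt hx.2) ht0mem.2⟩
        have hcw2 : Tendsto (fun x => ‖g x‖) (𝓝[Ico (0:ℝ) t0] t0) (𝓝 ‖g t0‖) :=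
          (hcw.mono hsub : ContinuousWithinAt _ (Ico (0:ℝ) t0) t0)
        refine le_of_tendsto hcw2 ?_
        exact eventually_mem_nhdsWithin.mono fun x hx => hbefore x (hsub hx) hx.2
    have ht0le1 : ∀ v ∈ Icc (0:ℝ) t0, ‖g v‖ ≤ 1 := by
      intro v hv
      rcases eq_or_lt_of_le hv.2 with heq | hlt
      · rw [heq]; exact ht0le
      · exact hbefore v ⟨hv.1, le_trans hv.2 ht0mem.2⟩ hlt
    have := key t0 ht0mem ht0le1
    linarith
  intro t ht
  exact key t ht fun v hv => main v ⟨hv.1, le_trans hv.2 ht.2⟩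
end Aux3


section Aux4
variable {n m M : ℕ}

lemma bd_riccati (i0 : Fin M) (A : Fin M → Matrix (Fin n) (Fin n) ℝ)
    (B : Matrix (Fin n) (Fin m) ℝ) (Ri : Matrix (Fin m) (Fin m) ℝ)
    (Q X : Matrix (Fin n) (Fin n) ℝ) :
    bd i0 (-((A i0)ᵀ * X + X * A i0 - X * B * Ri * Bᵀ * X + Q)) =
      -((augA A)ᵀ * bd i0 X + bd i0 X * augA A
          - bd i0 X * augB B (M := M) * Ri * (augB B (M := M))ᵀ * bd i0 X
          + augQ (fun i => if i = i0 then (1:ℝ) else 0) Q) := by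
  rw [augAT_mul_bd, bd_mul_augA, bd_K_term, augQ_eq_bd]
  simp only [bd_eq_bdL, ← map_add, ← map_sub, ← map_neg]

end Aux4

lemma gd_bound {I : Type*} [Fintype I] [DecidableEq I]
    (At Aa X Y KK dQm : Matrix I I ℝ) {Cp : ℝ}
    (hY : ‖Y‖ ≤ Cp) (hD : ‖X - Y‖ ≤ 1) :
    ‖At * (X - Y) + (X - Y) * Aa - ((X - Y) * KK * X + Y * KK * (X - Y)) + dQm‖ ≤
      ((Fintype.card I : ℝ) * ‖At‖ + (Fintype.card I : ℝ) * ‖Aa‖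
        + (Fintype.card I : ℝ) * (Fintype.card I : ℝ) * ‖KK‖ * (Cp + 1)
        + (Fintype.card I : ℝ) * (Fintype.card I : ℝ) * ‖KK‖ * Cp) * ‖X - Y‖ + ‖dQm‖ := by
  set c : ℝ := (Fintype.card I : ℝ) with hc
  have hc0 : 0 ≤ c := by rw [hc]; positivity
  have hCp0 : 0 ≤ Cp := le_trans (norm_nonneg _) hY
  have hD0 : 0 ≤ ‖X - Y‖ := norm_nonneg _
  have hX : ‖X‖ ≤ Cp + 1 := by
    calc ‖X‖ = ‖Y + (X - Y)‖ := by rw [add_sub_cancel]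
      _ ≤ ‖Y‖ + ‖X - Y‖ := norm_add_le _ _
      _ ≤ Cp + 1 := add_le_add hY hD
  have e1 : ‖At * (X - Y)‖ ≤ c * ‖At‖ * ‖X - Y‖ := matrix_norm_mul_le _ _
  have e2 : ‖(X - Y) * Aa‖ ≤ c * ‖X - Y‖ * ‖Aa‖ := matrix_norm_mul_le _ _
  have e3 : ‖(X - Y) * KK * X‖ ≤ c * (c * ‖X - Y‖ * ‖KK‖) * (Cp + 1) := by
    calc ‖(X - Y) * KK * X‖ ≤ c * ‖(X - Y) * KK‖ * ‖X‖ := matrix_norm_mul_le _ _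
      _ ≤ c * (c * ‖X - Y‖ * ‖KK‖) * (Cp + 1) := by
          have h1 : ‖(X - Y) * KK‖ ≤ c * ‖X - Y‖ * ‖KK‖ := matrix_norm_mul_le _ _
          have h2 : 0 ≤ ‖(X - Y) * KK‖ := norm_nonneg _
          exact mul_le_mul (mul_le_mul_of_nonneg_left h1 hc0) hX (norm_nonneg _) (by positivity)
  have e4 : ‖Y * KK * (X - Y)‖ ≤ c * (c * Cp * ‖KK‖) * ‖X - Y‖ := by
    calc ‖Y * KK * (X - Y)‖ ≤ c * ‖Y * KK‖ * ‖X - Y‖ := matrix_norm_mul_le _ _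
      _ ≤ c * (c * Cp * ‖KK‖) * ‖X - Y‖ := by
          have h1 : ‖Y * KK‖ ≤ c * ‖Y‖ * ‖KK‖ := matrix_norm_mul_le _ _
          have h2 : c * ‖Y‖ * ‖KK‖ ≤ c * Cp * ‖KK‖ := by
            have := mul_le_mul_of_nonneg_left hY hc0
            exact mul_le_mul_of_nonneg_right this (norm_nonneg _)
          exact mul_le_mul_of_nonneg_right (mul_le_mul_of_nonneg_left (le_trans h1 h2) hc0) hD0
  have t1 : ‖At * (X - Y) + (X - Y) * Aa - ((X - Y) * KK * X + Y * KK * (X - Y)) + dQm‖ ≤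
      ‖At * (X - Y)‖ + ‖(X - Y) * Aa‖ + (‖(X - Y) * KK * X‖ + ‖Y * KK * (X - Y)‖) + ‖dQm‖ := by
    have a1 := norm_add_le (At * (X - Y) + (X - Y) * Aa - ((X - Y) * KK * X + Y * KK * (X - Y))) dQm
    have a2 := norm_sub_le (At * (X - Y) + (X - Y) * Aa) ((X - Y) * KK * X + Y * KK * (X - Y))
    have a3 := norm_add_le (At * (X - Y)) ((X - Y) * Aa)
    have a4 := norm_add_le ((X - Y) * KK * X) (Y * KK * (X - Y))
    linarith
  nlinarith [norm_nonneg dQm]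

set_option maxHeartbeats 1000000 in
theorem stmt_16 {n m M : ℕ} (hM : 0 < M) (T : ℝ) (hT : 0 < T) (s : ℝ) (hs : s ∈ Set.Icc 0 T)
    (B : Matrix (Fin n) (Fin m) ℝ)
    (Q Qf : Matrix (Fin n) (Fin n) ℝ) (R : Matrix (Fin m) (Fin m) ℝ)
    (hQ : Q.PosSemidef) (hQf : Qf.PosSemidef) (hR : R.PosDef)
    (A : Fin M → Matrix (Fin n) (Fin n) ℝ)
    (α : ℕ → Fin M → ℝ) (hα0 : ∀ N i, 0 ≤ α N i) (hα1 : ∀ N, ∑ i, α N i = 1)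
    -- `α₁ᴺ → 1` and `αᵢᴺ → 0` for `i = 2, …, M`
    (hconv1 : Tendsto (fun N => α N ⟨0, hM⟩) atTop (𝓝 1))
    (hconv0 : ∀ i : Fin M, i ≠ ⟨0, hM⟩ → Tendsto (fun N => α N i) atTop (𝓝 0))
    -- the solutions of the augmented Riccati equations
    (PN : ℕ → ℝ → Matrix (Fin n × Fin M) (Fin n × Fin M) ℝ)
    (hPN : ∀ N, ∀ t ∈ Set.Icc s T,
      HasDerivAt (PN N)
        (-((augA A)ᵀ * PN N t + PN N t * augA A
            - PN N t * augB B (M := M) * R⁻¹ * (augB B (M := M))ᵀ * PN N t + augQ (α N) Q)) t)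
    (hPNT : ∀ N, PN N T = augQ (α N) Qf)
    -- the solution of the `n`-dimensional Riccati equation for `A₁`
    (P : ℝ → Matrix (Fin n) (Fin n) ℝ)
    (hP : ∀ t ∈ Set.Icc s T,
      HasDerivAt P (-((A ⟨0, hM⟩)ᵀ * P t + P t * A ⟨0, hM⟩
            - P t * B * R⁻¹ * Bᵀ * P t + Q)) t)
    (hPT : P T = Qf) :
    -- `P̃ᴺ` converges uniformly on `[s,T]` to the block matrix with top-left block `P`
    TendstoUniformlyOn (fun N t => PN N t)
      (fun t => Matrix.blockDiagonal (fun i => if i = (⟨0, hM⟩ : Fin M) then P t else 0))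
      atTop (Set.Icc s T) := by
  set i0 : Fin M := ⟨0, hM⟩ with hi0
  have hsT : s ≤ T := hs.2
  set e1 : Fin M → ℝ := fun i => if i = i0 then (1:ℝ) else 0 with he1
  set Pb : ℝ → Matrix (Fin n × Fin M) (Fin n × Fin M) ℝ := fun t => bd i0 (P t) with hPbdef
  -- `Pb` solves the augmented Riccati equation with weights `e1`
  have hPbar : ∀ t ∈ Set.Icc s T, HasDerivAt Pb
      (-((augA A)ᵀ * Pb t + Pb t * augA A
        - Pb t * augB B (M := M) * R⁻¹ * (augB B (M := M))ᵀ * Pb t + augQ e1 Q)) t := by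
    intro t ht
    have h1 := hP t ht
    have h2 := (LinearMap.toContinuousLinearMap (bdL i0)).hasFDerivAt.comp_hasDerivAt t h1
    simp only [LinearMap.coe_toContinuousLinearMap'] at h2
    have h3 : HasDerivAt Pb
        (bd i0 (-((A i0)ᵀ * P t + P t * A i0 - P t * B * R⁻¹ * Bᵀ * P t + Q))) t := h2
    rw [bd_riccati i0 A B R⁻¹ Q (P t)] at h3
    rw [he1]
    convert h3 using 3 <;> rw [hPbdef]
  have hPbcont : ContinuousOn Pb (Set.Icc s T) := fun t ht =>
    ((hPbar t ht).continuousAt).continuousWithinAt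
  obtain ⟨Cp0, hCp0⟩ := isCompact_Icc.exists_bound_of_continuousOn hPbcont
  set Cp : ℝ := max Cp0 0 with hCpdef
  have hCp : ∀ t ∈ Set.Icc s T, ‖Pb t‖ ≤ Cp := fun t ht =>
    le_trans (hCp0 t ht) (le_max_left _ _)
  have hCpnn : 0 ≤ Cp := le_max_right _ _
  set KK : Matrix (Fin n × Fin M) (Fin n × Fin M) ℝ :=
    augB B (M := M) * R⁻¹ * (augB B (M := M))ᵀ with hKKdef
  set c : ℝ := (Fintype.card (Fin n × Fin M) : ℝ) with hcdef
  have hc0 : 0 ≤ c := by rw [hcdef]; positivity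
  set a : ℝ := c * ‖(augA A)ᵀ‖ + c * ‖augA A‖ + c * c * ‖KK‖ * (Cp + 1) + c * c * ‖KK‖ * Cp + 1
    with hadef
  have ha : 0 < a := by
    have h1 : 0 ≤ c * ‖(augA A)ᵀ‖ := mul_nonneg hc0 (norm_nonneg _)
    have h2 : 0 ≤ c * ‖augA A‖ := mul_nonneg hc0 (norm_nonneg _)
    have h3 : 0 ≤ c * c * ‖KK‖ * (Cp + 1) :=
      mul_nonneg (mul_nonneg (mul_nonneg hc0 hc0) (norm_nonneg _)) (by linarith)
    have h4 : 0 ≤ c * c * ‖KK‖ * Cp :=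
      mul_nonneg (mul_nonneg (mul_nonneg hc0 hc0) (norm_nonneg _)) hCpnn
    rw [hadef]; linarith
  -- the perturbations tend to zero
  have hconvZ : ∀ Z : Matrix (Fin n) (Fin n) ℝ,
      Tendsto (fun N => ‖augQ (α N) Z - augQ e1 Z‖) atTop (𝓝 0) := by
    intro Z
    have hb : ∀ N, ‖augQ (α N) Z - augQ e1 Z‖ ≤ ∑ i, |α N i - e1 i| * ‖Z‖ := by
      intro N
      have hEq : augQ (α N) Z - augQ e1 Z
          = Matrix.blockDiagonal (fun i => (α N i - e1 i) • Z) := by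
        have harr : ((fun i => α N i • Z) - fun i => e1 i • Z)
            = (fun i => (α N i - e1 i) • Z) := by
          funext i
          simp [sub_smul]
        rw [augQ, augQ, ← Matrix.blockDiagonal_sub, harr]
      rw [hEq]
      refine le_trans (norm_blockDiagonal_le _) ?_
      refine Finset.sum_le_sum fun i _ => ?_
      rw [norm_smul, Real.norm_eq_abs]
    have hsum : Tendsto (fun N => ∑ i, |α N i - e1 i| * ‖Z‖) atTop (𝓝 0) := by
      have hterm : ∀ i : Fin M, Tendsto (fun N => |α N i - e1 i| * ‖Z‖) atTop (𝓝 0) := by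
        intro i
        have h1 : Tendsto (fun N => α N i - e1 i) atTop (𝓝 0) := by
          by_cases h : i = i0
          · subst h
            have := hconv1.sub_const 1
            rw [sub_self] at this
            simpa [he1] using this
          · have := hconv0 i (by rw [hi0] at h; exact h)
            simpa [he1, h] using this.sub_const 0
        have := h1.abs.mul_const ‖Z‖
        simpa using this
      have := tendsto_finset_sum (Finset.univ : Finset (Fin M)) (fun i _ => hterm i)
      simpa using this
    exact squeeze_zero (fun N => norm_nonneg _) hb hsum
  set dQ : ℕ → ℝ := fun N => ‖augQ (α N) Q - augQ e1 Q‖ with hdQdef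
  set dQf : ℕ → ℝ := fun N => ‖augQ (α N) Qf - augQ e1 Qf‖ with hdQfdef
  set L' : ℝ := T - s with hL'def
  have hL'0 : 0 ≤ L' := by rw [hL'def]; linarith
  set ρfun : ℕ → ℝ := fun N => (dQf N + dQ N / a) * Real.exp (a * L') with hρdef
  have hρten : Tendsto ρfun atTop (𝓝 0) := by
    have h1 : Tendsto (fun N => (dQf N + dQ N / a) * Real.exp (a * L')) atTop
        (𝓝 ((0 + 0 / a) * Real.exp (a * L'))) :=
      (((hconvZ Qf).add ((hconvZ Q).div_const a)).mul_const _)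
    rw [hρdef]
    simpa using h1
  refine Metric.tendstoUniformlyOn_iff.2 ?_
  intro ε hε
  filter_upwards [hρten.eventually_lt_const (lt_min hε one_pos)] with N hN
  intro t ht
  have hdQnn : 0 ≤ dQ N := by rw [hdQdef]; exact norm_nonneg _
  have hdQfnn : 0 ≤ dQf N := by rw [hdQfdef]; exact norm_nonneg _
  -- time-reversed difference
  set g : ℝ → Matrix (Fin n × Fin M) (Fin n × Fin M) ℝ :=
    fun u => PN N (T - u) - Pb (T - u) with hgdef
  have hmem : ∀ u ∈ Set.Icc (0:ℝ) L', T - u ∈ Set.Icc s T := by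
    intro u hu
    have h2 := hu.2
    rw [hL'def] at h2
    exact ⟨by linarith, by linarith [hu.1]⟩
  have hPNcont : ContinuousOn (PN N) (Set.Icc s T) := fun t' ht' =>
    ((hPN N t' ht').continuousAt).continuousWithinAt
  have hTsub : Continuous fun u : ℝ => T - u := by continuity
  have hgcont : ContinuousOn g (Set.Icc 0 L') := by
    rw [hgdef]
    exact (hPNcont.comp hTsub.continuousOn hmem).sub (hPbcont.comp hTsub.continuousOn hmem)
  set gd : ℝ → Matrix (Fin n × Fin M) (Fin n × Fin M) ℝ := fun u =>
    -((-((augA A)ᵀ * PN N (T - u) + PN N (T - u) * augA A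
        - PN N (T - u) * augB B (M := M) * R⁻¹ * (augB B (M := M))ᵀ * PN N (T - u)
        + augQ (α N) Q))
      - (-((augA A)ᵀ * Pb (T - u) + Pb (T - u) * augA A
        - Pb (T - u) * augB B (M := M) * R⁻¹ * (augB B (M := M))ᵀ * Pb (T - u)
        + augQ e1 Q))) with hgddef
  have hgderiv : ∀ u ∈ Set.Icc (0:ℝ) L', HasDerivAt g (gd u) u := by
    intro u hu
    have h1 := (hPN N _ (hmem u hu)).sub (hPbar _ (hmem u hu))
    have h2 : HasDerivAt (fun v : ℝ => T - v) (-1) u := (hasDerivAt_id u).const_sub T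
    have h3 := h1.scomp_of_eq u h2 rfl
    rw [hgdef, hgddef]
    convert h3 using 1
    case e'_9 => exact (neg_one_smul ℝ (M := Matrix (Fin n × Fin M) (Fin n × Fin M) ℝ) _).symm
    all_goals rfl
  have hassoc : ∀ W Z : Matrix (Fin n × Fin M) (Fin n × Fin M) ℝ,
      W * augB B (M := M) * R⁻¹ * (augB B (M := M))ᵀ * Z = W * KK * Z := by
    intro W Z
    rw [hKKdef]
    simp only [Matrix.mul_assoc]
  have hb_aux : ∀ u ∈ Set.Icc (0:ℝ) L', ‖g u‖ ≤ 1 → ‖gd u‖ ≤ a * ‖g u‖ + dQ N := by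
    intro u hu hg1
    have hτ := hmem u hu
    have hgu : g u = PN N (T - u) - Pb (T - u) := by rw [hgdef]
    have hgd_eq : gd u = (augA A)ᵀ * (PN N (T - u) - Pb (T - u))
        + (PN N (T - u) - Pb (T - u)) * augA A
        - ((PN N (T - u) - Pb (T - u)) * KK * PN N (T - u)
            + Pb (T - u) * KK * (PN N (T - u) - Pb (T - u)))
        + (augQ (α N) Q - augQ e1 Q) := by
      rw [hgddef]
      simp only []
      rw [hassoc, hassoc,
        riccati_diff ((augA A)ᵀ) (augA A) KK (augQ (α N) Q) (augQ e1 Q)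
          (PN N (T - u)) (Pb (T - u)), neg_neg]
    rw [hgd_eq]
    have hDle : ‖PN N (T - u) - Pb (T - u)‖ ≤ 1 := by rw [← hgu]; exact hg1
    have hbd := gd_bound ((augA A)ᵀ) (augA A) (PN N (T - u)) (Pb (T - u)) KK
      (augQ (α N) Q - augQ e1 Q) (hCp _ hτ) hDle
    rw [← hgu] at hbd
    have hfin : (c * ‖(augA A)ᵀ‖ + c * ‖augA A‖ + c * c * ‖KK‖ * (Cp + 1)
        + c * c * ‖KK‖ * Cp) * ‖g u‖ + ‖augQ (α N) Q - augQ e1 Q‖ ≤ a * ‖g u‖ + dQ N := by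
      simp only [hadef, hdQdef]
      have := norm_nonneg (g u)
      nlinarith
    calc ‖_‖ ≤ _ := hbd
      _ ≤ a * ‖g u‖ + dQ N := hfin
  have hg0 : g 0 = augQ (α N) Qf - augQ e1 Qf := by
    rw [hgdef]
    simp only [sub_zero]
    rw [hPNT N]
    congr 1
    rw [hPbdef]
    simp only []
    rw [hPT, he1, augQ_eq_bd]
  have key : ∀ t' ∈ Set.Icc (0:ℝ) L', (∀ u ∈ Set.Icc (0:ℝ) t', ‖g u‖ ≤ 1) → ‖g t'‖ ≤ ρfun N := by
    intro t' ht' hyp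
    have hgron := norm_le_gronwallBound_of_norm_deriv_right_le
      (hgcont.mono (Set.Icc_subset_Icc le_rfl ht'.2))
      (fun v hv => (hgderiv v ⟨hv.1, le_trans (le_of_lt hv.2) ht'.2⟩).hasDerivWithinAt)
      (le_of_eq (show ‖g 0‖ = dQf N by rw [hg0]))
      (fun v hv => hb_aux v ⟨hv.1, le_trans (le_of_lt hv.2) ht'.2⟩ (hyp v ⟨hv.1, le_of_lt hv.2⟩))
      t' ⟨ht'.1, le_rfl⟩
    calc ‖g t'‖ ≤ gronwallBound (dQf N) a (dQ N) (t' - 0) := hgron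
      _ ≤ (dQf N + dQ N / a) * Real.exp (a * L') := by
          rw [sub_zero]
          exact gronwall_le hdQfnn hdQnn ha ht'.1 ht'.2
      _ = ρfun N := by rw [hρdef]
  have hρlt1 : ρfun N < 1 := lt_of_lt_of_le hN (min_le_right _ _)
  have hexp1 : 1 ≤ Real.exp (a * L') := by
    have h1 := Real.add_one_le_exp (a * L')
    have h2 : 0 ≤ a * L' := mul_nonneg (le_of_lt ha) hL'0
    linarith
  have hg0le : ‖g 0‖ ≤ ρfun N := by
    rw [hg0]
    have h1 : ‖augQ (α N) Qf - augQ e1 Qf‖ = dQf N := by rw [hdQfdef]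
    rw [h1, hρdef]
    have h2 : 0 ≤ dQ N / a := div_nonneg hdQnn (le_of_lt ha)
    nlinarith
  have hTt : T - t ∈ Set.Icc (0:ℝ) L' := by
    constructor
    · linarith [ht.2]
    · rw [hL'def]; linarith [ht.1]
  have hfin := bootstrap hL'0 hgcont hρlt1 hg0le key (T - t) hTt
  have hgTt : g (T - t) = PN N t - Pb t := by
    rw [hgdef]
    simp only [sub_sub_cancel]
  have hgoal : dist (Pb t) (PN N t) < ε := by
    rw [dist_eq_norm, ← norm_neg, neg_sub, ← hgTt]
    exact lt_of_le_of_lt hfin (lt_of_lt_of_le hN (min_le_left _ _))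
  exact hgoal
end
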